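/- If (W, M) ∈ D is an equilibrium point of the synaptic ODE and Q is any k×k real orthogonal matrix, then (QW, QMQᵀ) is also an equilibrium point of the synaptic ODE. -/

import Mathlib

open Matrix
open scoped Matrix

/-- An equilibrium point of the synaptic ODE: a pair `(W, M)` with `M` symmetric positive
definite satisfying `M⁻¹WA = W` and `M⁻¹WAWᵀM⁻¹ = M`. -/
def IsEquilibrium {k n : ℕ} (A : Matrix (Fin n) (Fin n) ℝ)
    (W : Matrix (Fin k) (Fin n) ℝ) (M : Matrix (Fin k) (Fin k) ℝ) : Prop :=
  M.PosDef ∧ M⁻¹ * W * A = W ∧ M⁻¹ * W * A * Wᵀ * M⁻¹ = M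

lemma posDef_conj_orth {k : ℕ} {M Q : Matrix (Fin k) (Fin k) ℝ}
    (hM : M.PosDef) (hQ : Qᵀ * Q = 1) (hQ' : Q * Qᵀ = 1) : (Q * M * Qᵀ).PosDef := by
  have hsym : Mᵀ = M := by
    have := hM.1
    rwa [Matrix.IsHermitian, conjTranspose_eq_transpose_of_trivial] at this
  refine Matrix.PosDef.of_dotProduct_mulVec_pos ?_ ?_
  · rw [Matrix.IsHermitian, conjTranspose_eq_transpose_of_trivial,
      transpose_mul, transpose_mul, transpose_transpose, hsym, Matrix.mul_assoc]
  · intro x hx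
    have hx' : Qᵀ *ᵥ x ≠ 0 := by
      intro h
      apply hx
      have h2 : Q *ᵥ (Qᵀ *ᵥ x) = Q *ᵥ 0 := congrArg _ h
      rwa [mulVec_mulVec, hQ', one_mulVec, mulVec_zero] at h2
    have := hM.dotProduct_mulVec_pos hx'
    have e : x ⬝ᵥ (Q * M * Qᵀ) *ᵥ x = (Qᵀ *ᵥ x) ⬝ᵥ M *ᵥ (Qᵀ *ᵥ x) := by
      rw [← mulVec_mulVec, ← mulVec_mulVec, dotProduct_mulVec, ← mulVec_transpose]
    simpa [e] using this

/-- If `(W, M)` is an equilibrium point and `Q` is orthogonal, then `(QW, QMQᵀ)` is also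
an equilibrium point. -/
theorem isEquilibrium_orthogonal_conj {k n : ℕ} (hk : 0 < k) (hkn : k < n)
    (A : Matrix (Fin n) (Fin n) ℝ) (hA : A.PosDef)
    (W : Matrix (Fin k) (Fin n) ℝ) (M : Matrix (Fin k) (Fin k) ℝ)
    (hWM : IsEquilibrium A W M)
    (Q : Matrix (Fin k) (Fin k) ℝ) (hQ : Qᵀ * Q = 1) (hQ' : Q * Qᵀ = 1) :
    IsEquilibrium A (Q * W) (Q * M * Qᵀ) := by
  obtain ⟨hM, h1, h2⟩ := hWM
  have hMdet : IsUnit M.det := hM.isUnit.map detMonoidHom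
  have hMinv : M * M⁻¹ = 1 := Matrix.mul_nonsing_inv M hMdet
  have hinv : (Q * M * Qᵀ)⁻¹ = Q * M⁻¹ * Qᵀ := by
    apply Matrix.inv_eq_right_inv
    calc Q * M * Qᵀ * (Q * M⁻¹ * Qᵀ)
        = Q * M * (Qᵀ * Q) * M⁻¹ * Qᵀ := by simp only [Matrix.mul_assoc]
      _ = 1 := by rw [hQ, Matrix.mul_one, Matrix.mul_assoc Q M M⁻¹, hMinv,
          Matrix.mul_one, hQ']
  refine ⟨posDef_conj_orth hM hQ hQ', ?_, ?_⟩
  · rw [hinv]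
    calc Q * M⁻¹ * Qᵀ * (Q * W) * A
        = Q * M⁻¹ * (Qᵀ * Q) * W * A := by simp only [Matrix.mul_assoc]
      _ = Q * (M⁻¹ * W * A) := by rw [hQ, Matrix.mul_one]; simp only [Matrix.mul_assoc]
      _ = Q * W := by rw [h1]
  · rw [hinv, transpose_mul]
    calc Q * M⁻¹ * Qᵀ * (Q * W) * A * (Wᵀ * Qᵀ) * (Q * M⁻¹ * Qᵀ)
        = Q * M⁻¹ * (Qᵀ * Q) * W * A * Wᵀ * (Qᵀ * Q) * M⁻¹ * Qᵀ := by
          simp only [Matrix.mul_assoc]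
      _ = Q * (M⁻¹ * W * A * Wᵀ * M⁻¹) * Qᵀ := by
          rw [hQ, Matrix.mul_one, Matrix.mul_one]; simp only [Matrix.mul_assoc]
      _ = Q * M * Qᵀ := by rw [h2]
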